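/- For 3-parameter generalized vectors p, q, r, (p ∧ q) ∧ r = f(p,r)·q − f(q,r)·p. -/
import Mathlib

def gf (l1 l2 l3 : ℝ) (a b : ℝ × ℝ × ℝ) : ℝ :=
  l1*l2*a.1*b.1 + l1*l3*a.2.1*b.2.1 + l2*l3*a.2.2*b.2.2

def gcross (l1 l2 l3 : ℝ) (a b : ℝ × ℝ × ℝ) : ℝ × ℝ × ℝ :=
  (l3*(a.2.1*b.2.2 - a.2.2*b.2.1), l2*(a.2.2*b.1 - a.1*b.2.2), l1*(a.1*b.2.1 - a.2.1*b.1))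

theorem triple_cross_right (l1 l2 l3 : ℝ) (p q r : ℝ × ℝ × ℝ) :
    gcross l1 l2 l3 (gcross l1 l2 l3 p q) r =
      gf l1 l2 l3 p r • q - gf l1 l2 l3 q r • p := by
  simp only [gcross, gf, Prod.smul_mk, Prod.mk_sub_mk, Prod.ext_iff, smul_eq_mul,
    Prod.fst_sub, Prod.snd_sub, Prod.smul_fst, Prod.smul_snd]
  refine ⟨by ring, by ring, by ring⟩
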